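/- Let V be a weight module over Vir[G] on which C acts by a scalar, and let α, β ∈ ℂ with β ∉ {0,1} or α ∉ G. Then the intermediate series module V(α,β,G) is irreducible, and its support equals α + G. -/

import Mathlib

open Finsupp

/-- The action of `d_x` on the intermediate series module `V(α,β,G)` with basis `{v_y : y ∈ G}`:
`d_x v_y = (α + y + xβ) v_{x+y}` (the central element `C` acts by `0`). -/
noncomputable def dActL (G : AddSubgroup ℂ) (α β : ℂ) (x : ↥G) : (↥G →₀ ℂ) →ₗ[ℂ] (↥G →₀ ℂ) :=
  Finsupp.lsum ℂ fun y : ↥G =>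
    LinearMap.toSpanSingleton ℂ (↥G →₀ ℂ) ((α + (y : ℂ) + (x : ℂ) * β) • Finsupp.single (x + y) (1 : ℂ))

lemma dActL_single (G : AddSubgroup ℂ) (α β : ℂ) (x y : ↥G) (c : ℂ) :
    dActL G α β x (single y c) = (c * (α + (y:ℂ) + (x:ℂ) * β)) • single (x + y) (1:ℂ) := by
  rw [dActL, Finsupp.lsum_single, LinearMap.toSpanSingleton_apply, smul_smul]

lemma dActL_zero_apply (G : AddSubgroup ℂ) (α β : ℂ) (v : ↥G →₀ ℂ) (z : ↥G) :
    (dActL G α β 0 v) z = (α + (z:ℂ)) * v z := by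
  have h1 : dActL G α β 0 v = v.sum fun y c => (c * (α + (y:ℂ))) • single y (1:ℂ) := by
    rw [dActL, Finsupp.lsum_apply]
    apply Finsupp.sum_congr
    intro y _
    rw [LinearMap.toSpanSingleton_apply, smul_smul]
    norm_num
  rw [h1, Finsupp.sum_apply, Finsupp.sum]
  rw [Finset.sum_eq_single z]
  · by_cases hz : z ∈ v.support
    · rw [Finsupp.smul_apply, Finsupp.single_eq_same, smul_eq_mul, mul_one, mul_comm]
    · simp only [Finsupp.notMem_support_iff] at hz; simp [hz]
  · intro b _ hb
    rw [Finsupp.smul_apply, Finsupp.single_apply, if_neg hb, smul_zero]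
  · intro hz; simp only [Finsupp.notMem_support_iff] at hz; simp [hz]

lemma step_lemma (G : AddSubgroup ℂ) (α β : ℂ) (S : Submodule ℂ (↥G →₀ ℂ))
    (hS : ∀ x : ↥G, ∀ v ∈ S, dActL G α β x v ∈ S) (a b : ↥G)
    (ha : single a (1:ℂ) ∈ S) (hc : α + (a:ℂ) + ((b:ℂ) - (a:ℂ)) * β ≠ 0) :
    single b (1:ℂ) ∈ S := by
  have h1 := hS (b - a) _ ha
  rw [dActL_single] at h1
  have hba : b - a + a = b := sub_add_cancel b a
  have hco : ((b - a : ↥G) : ℂ) = (b:ℂ) - (a:ℂ) := rfl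
  rw [hba, hco, one_mul] at h1
  have := S.smul_mem (α + (a:ℂ) + ((b:ℂ) - (a:ℂ)) * β)⁻¹ h1
  rwa [smul_smul, inv_mul_cancel₀ hc, one_smul] at this

lemma infinite_G (G : AddSubgroup ℂ) (hG : G ≠ ⊥) : Infinite ↥G := by
  obtain ⟨g, hgG, hg0⟩ : ∃ g ∈ G, g ≠ 0 := by
    by_contra hcon
    push_neg at hcon
    exact hG ((AddSubgroup.eq_bot_iff_forall G).mpr hcon)
  refine Infinite.of_injective (fun n : ℤ => (n • (⟨g, hgG⟩ : ↥G))) ?_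
  intro n m hnm
  have h2 : (n:ℂ) * g = (m:ℂ) * g := by
    have := congrArg (fun w : ↥G => (w:ℂ)) hnm
    push_cast at this
    simpa [zsmul_eq_mul] using this
  exact_mod_cast mul_right_cancel₀ hg0 h2

lemma avoid_two (G : AddSubgroup ℂ) (hG : G ≠ ⊥) (a b : ℂ) :
    ∃ w : ↥G, (w:ℂ) ≠ a ∧ (w:ℂ) ≠ b := by
  haveI := infinite_G G hG
  by_contra hcon
  push_neg at hcon
  haveI : Finite ({a, b} : Set ℂ) := Set.toFinite _
  have : Function.Injective (fun w : ↥G => (⟨(w:ℂ), by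
      rcases Classical.em ((w:ℂ) = a) with h | h
      · exact Set.mem_insert_iff.mpr (Or.inl h)
      · exact Set.mem_insert_iff.mpr (Or.inr (hcon w h))⟩ : ({a, b} : Set ℂ))) := by
    intro x y hxy
    exact Subtype.coe_injective (Subtype.mk_eq_mk.mp hxy)
  have := Finite.of_injective _ this
  exact absurd this (by rw [not_finite_iff_infinite]; infer_instance)

lemma reach (G : AddSubgroup ℂ) (hG : G ≠ ⊥) (α β : ℂ)
    (h : (β ≠ 0 ∧ β ≠ 1) ∨ α ∉ G) (S : Submodule ℂ (↥G →₀ ℂ))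
    (hS : ∀ x : ↥G, ∀ v ∈ S, dActL G α β x v ∈ S) (y : ↥G)
    (hy : single y (1:ℂ) ∈ S) (z : ↥G) : single z (1:ℂ) ∈ S := by
  by_cases hβ : β ≠ 0 ∧ β ≠ 1
  · obtain ⟨hβ0, hβ1⟩ := hβ
    obtain ⟨w, hw1, hw2⟩ := avoid_two G hG ((y:ℂ) - (α + (y:ℂ))/β) ((α + (z:ℂ)*β)/(β - 1))
    have hf : α + (y:ℂ) + ((w:ℂ) - (y:ℂ)) * β ≠ 0 := by
      intro h0
      apply hw1
      field_simp
      linear_combination h0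
    have hg : α + (w:ℂ) + ((z:ℂ) - (w:ℂ)) * β ≠ 0 := by
      intro h0
      apply hw2
      have hβ1' : β - 1 ≠ 0 := sub_ne_zero.mpr hβ1
      field_simp
      linear_combination -h0
    exact step_lemma G α β S hS w z (step_lemma G α β S hS y w hy hf) hg
  · have hα : α ∉ G := by tauto
    rcases Classical.em (β = 0) with h0 | h0
    · apply step_lemma G α β S hS y z hy
      rw [h0, mul_zero, add_zero]
      intro hc
      have he : α = -(y:ℂ) := by linear_combination hc
      rw [he] at hα
      exact hα (neg_mem y.2)
    · have h1 : β = 1 := by tauto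
      apply step_lemma G α β S hS y z hy
      rw [h1, mul_one]
      intro hc
      have he : α = -(z:ℂ) := by linear_combination hc
      rw [he] at hα
      exact hα (neg_mem z.2)

lemma extract (G : AddSubgroup ℂ) (α β : ℂ) (S : Submodule ℂ (↥G →₀ ℂ))
    (hS0 : ∀ v ∈ S, dActL G α β 0 v ∈ S) :
    ∀ n : ℕ, ∀ v : ↥G →₀ ℂ, v.support.card ≤ n → v ∈ S → v ≠ 0 →
      ∃ y : ↥G, single y (1:ℂ) ∈ S := by
  intro n
  induction n with
  | zero =>
    intro v hcard _ hv0
    exact absurd (Finsupp.support_eq_empty.mp (Finset.card_eq_zero.mp (Nat.le_zero.mp hcard))) hv0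
  | succ n ih =>
    intro v hcard hvS hv0
    by_cases hc : v.support.card ≤ n
    · exact ih v hc hvS hv0
    by_cases h1 : v.support.card = 1
    · obtain ⟨y, hy, hveq⟩ := Finsupp.card_support_eq_one.mp h1
      refine ⟨y, ?_⟩
      have heq : single y (1:ℂ) = (v y)⁻¹ • v := by
        rw [hveq, Finsupp.smul_single, smul_eq_mul, Finsupp.single_eq_same, inv_mul_cancel₀ hy]
      rw [heq]
      exact S.smul_mem _ hvS
    · have h2 : 1 < v.support.card := by
        have h0 : v.support.card ≠ 0 := fun hh =>
          hv0 (Finsupp.support_eq_empty.mp (Finset.card_eq_zero.mp hh))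
        omega
      obtain ⟨y₁, hy₁, y₂, hy₂, hne⟩ := Finset.one_lt_card.mp h2
      set w := dActL G α β 0 v - (α + (y₂:ℂ)) • v with hw
      have hwS : w ∈ S := S.sub_mem (hS0 v hvS) (S.smul_mem _ hvS)
      have hwz : ∀ z : ↥G, w z = ((z:ℂ) - (y₂:ℂ)) * v z := by
        intro z
        rw [hw, Finsupp.sub_apply, Finsupp.smul_apply, dActL_zero_apply, smul_eq_mul]
        ring
      have hw0 : w ≠ 0 := by
        intro hh
        have h3 := hwz y₁
        rw [hh] at h3
        simp only [Finsupp.coe_zero, Pi.zero_apply] at h3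
        have hne' : (y₁:ℂ) - (y₂:ℂ) ≠ 0 :=
          sub_ne_zero.mpr (fun hc => hne (Subtype.coe_injective hc))
        exact (Finsupp.mem_support_iff.mp hy₁) (by
          rcases mul_eq_zero.mp h3.symm with h | h
          · exact absurd h hne'
          · exact h)
      have hsub : w.support ⊆ v.support.erase y₂ := by
        intro z hz
        rw [Finsupp.mem_support_iff, hwz] at hz
        rw [Finset.mem_erase, Finsupp.mem_support_iff]
        constructor
        · intro hzz
          rw [hzz] at hz
          simp at hz
        · exact fun hvz => hz (by rw [hvz, mul_zero])
      have hcard' : w.support.card ≤ n := by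
        have := Finset.card_le_card hsub
        have h4 := Finset.card_erase_of_mem hy₂
        omega
      exact ih w hcard' hwS hw0


/-- if `β ∉ {0,1}` or `α ∉ G`, the intermediate series module `V(α,β,G)` is
irreducible and its support (the set of `d₀`-eigenvalues) is `α + G`. -/
theorem intermediate_series_irreducible (G : AddSubgroup ℂ) (hG : G ≠ ⊥) (α β : ℂ)
    (h : (β ≠ 0 ∧ β ≠ 1) ∨ α ∉ G) :
    (∀ S : Submodule ℂ (↥G →₀ ℂ),
        (∀ x : ↥G, ∀ v ∈ S, dActL G α β x v ∈ S) → S = ⊥ ∨ S = ⊤) ∧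
    {μ : ℂ | ∃ v : ↥G →₀ ℂ, v ≠ 0 ∧ dActL G α β 0 v = μ • v} =
      {μ : ℂ | ∃ y : ↥G, μ = α + y} := by
  constructor
  · intro S hS
    by_cases hbot : S = ⊥
    · exact Or.inl hbot
    right
    obtain ⟨v, hvS, hv0⟩ := Submodule.exists_mem_ne_zero_of_ne_bot hbot
    obtain ⟨y, hy⟩ := extract G α β S (fun v hv => hS 0 v hv) v.support.card v le_rfl hvS hv0
    rw [Submodule.eq_top_iff']
    intro u
    induction u using Finsupp.induction_linear with
    | zero => exact S.zero_mem
    | add f g hf hg => exact S.add_mem hf hg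
    | single a b =>
      have hb : single a b = b • single a (1:ℂ) := by
        rw [Finsupp.smul_single, smul_eq_mul, mul_one]
      rw [hb]
      exact S.smul_mem _ (reach G hG α β h S hS y hy a)
  · ext μ
    simp only [Set.mem_setOf_eq]
    constructor
    · rintro ⟨v, hv0, hev⟩
      obtain ⟨z, hz⟩ : ∃ z, v z ≠ 0 := by
        by_contra hcon
        push_neg at hcon
        exact hv0 (Finsupp.ext hcon)
      have h1 := congrArg (fun w : ↥G →₀ ℂ => w z) hev
      simp only [Finsupp.smul_apply, smul_eq_mul] at h1
      rw [dActL_zero_apply] at h1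
      exact ⟨z, (mul_right_cancel₀ hz h1).symm⟩
    · rintro ⟨y, rfl⟩
      refine ⟨single y (1:ℂ), by simp, ?_⟩
      rw [dActL_single]
      norm_num
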